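/- Every Condorcet domain on a 3-element set of alternatives has size at most 4. -/

import Mathlib

/-- The majority relation of a profile `P` of `k` voters: `a` beats `b` if more voters
rank `a` above `b` than rank `b` above `a`. -/
def Maj {α : Type*} {k : ℕ} (P : Fin k → α → α → Prop) (a b : α) : Prop :=
  Nat.card {i : Fin k // P i a b} > Nat.card {i : Fin k // P i b a}

/-- `D` is a Condorcet domain: a set of linear orders (strict total orders) on the
alternatives such that every profile with an odd number of voters drawn from `D`
has a transitive majority relation. -/
def IsCondorcetDomain {α : Type*} (D : Set (α → α → Prop)) : Prop :=
  (∀ r ∈ D, IsStrictTotalOrder α r) ∧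
  ∀ (k : ℕ), Odd k → ∀ P : Fin k → α → α → Prop,
    (∀ i, P i ∈ D) → Transitive (Maj P)

section Aux

/-- Encode a relation on `Fin 3` by its (classical) truth values on the three pairs. -/
noncomputable def enc (r : Fin 3 → Fin 3 → Prop) : Bool × Bool × Bool :=
  (@decide (r 0 1) (Classical.propDecidable _),
   @decide (r 0 2) (Classical.propDecidable _),
   @decide (r 1 2) (Classical.propDecidable _))

lemma of_enc {r : Fin 3 → Fin 3 → Prop} {x y z : Bool} (h : enc r = (x, y, z)) :
    (r 0 1 ↔ x = true) ∧ (r 0 2 ↔ y = true) ∧ (r 1 2 ↔ z = true) := by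
  unfold enc at h
  rw [Prod.mk.injEq, Prod.mk.injEq] at h
  obtain ⟨h1, h2, h3⟩ := h
  subst h1; subst h2; subst h3
  exact ⟨⟨fun hp => @decide_eq_true _ (Classical.propDecidable _) hp, fun hb => @of_decide_eq_true _ (Classical.propDecidable _) hb⟩,
    ⟨fun hp => @decide_eq_true _ (Classical.propDecidable _) hp, fun hb => @of_decide_eq_true _ (Classical.propDecidable _) hb⟩,
    ⟨fun hp => @decide_eq_true _ (Classical.propDecidable _) hp, fun hb => @of_decide_eq_true _ (Classical.propDecidable _) hb⟩⟩

variable {r s : Fin 3 → Fin 3 → Prop}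

lemma stt_asymm (hr : IsStrictTotalOrder (Fin 3) r) {a b : Fin 3} (h : r a b) : ¬ r b a :=
  fun h' => hr.irrefl a (hr.trans a b a h h')

lemma stt_total (hr : IsStrictTotalOrder (Fin 3) r) {a b : Fin 3} (hab : a ≠ b)
    (h : ¬ r a b) : r b a := by
  by_contra h'
  exact hab (hr.trichotomous a b h h')

lemma stt_iff_not (hr : IsStrictTotalOrder (Fin 3) r) {a b : Fin 3} (hab : a ≠ b) :
    r b a ↔ ¬ r a b :=
  ⟨fun h h' => stt_asymm hr h' h, stt_total hr hab⟩

lemma enc_injOn (hr : IsStrictTotalOrder (Fin 3) r) (hs : IsStrictTotalOrder (Fin 3) s)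
    (h : enc r = enc s) : r = s := by
  obtain ⟨e01, e02, e12⟩ := of_enc (x := (enc s).1) (y := (enc s).2.1) (z := (enc s).2.2) h
  obtain ⟨f01, f02, f12⟩ := of_enc (r := s) (x := (enc s).1) (y := (enc s).2.1) (z := (enc s).2.2) rfl
  have g01 : r 0 1 ↔ s 0 1 := e01.trans f01.symm
  have g02 : r 0 2 ↔ s 0 2 := e02.trans f02.symm
  have g12 : r 1 2 ↔ s 1 2 := e12.trans f12.symm
  have g10 : r 1 0 ↔ s 1 0 := by
    rw [stt_iff_not hr (by decide), stt_iff_not hs (by decide), g01]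
  have g20 : r 2 0 ↔ s 2 0 := by
    rw [stt_iff_not hr (by decide), stt_iff_not hs (by decide), g02]
  have g21 : r 2 1 ↔ s 2 1 := by
    rw [stt_iff_not hr (by decide), stt_iff_not hs (by decide), g12]
  funext a b
  have diag : ∀ a : Fin 3, r a a = s a a := fun a =>
    propext (iff_of_false (hr.irrefl a) (hs.irrefl a))
  fin_cases a <;> fin_cases b <;>
    first
      | exact diag _
      | exact propext g01 | exact propext g02 | exact propext g12
      | exact propext g10 | exact propext g20 | exact propext g21

lemma card_eq_two (Q : Fin 3 → Prop) (j : Fin 3) (hj : ¬ Q j) (h : ∀ i, i ≠ j → Q i) :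
    Nat.card {i // Q i} = 2 := by
  have e : ∀ i, Q i ↔ i ≠ j := fun i => ⟨fun hq hij => hj (hij ▸ hq), h i⟩
  rw [Nat.card_congr (Equiv.subtypeEquivRight e), Nat.card_eq_fintype_card]
  fin_cases j <;> decide

lemma card_eq_one (Q : Fin 3 → Prop) (j : Fin 3) (hj : Q j) (h : ∀ i, i ≠ j → ¬ Q i) :
    Nat.card {i // Q i} = 1 := by
  have e : ∀ i, Q i ↔ i = j := fun i =>
    ⟨fun hq => by by_contra hij; exact h i hij hq, fun hij => hij ▸ hj⟩
  rw [Nat.card_congr (Equiv.subtypeEquivRight e), Nat.card_eq_fintype_card]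
  fin_cases j <;> decide

lemma no_cycle {D : Set (Fin 3 → Fin 3 → Prop)} (hD : IsCondorcetDomain D)
    {r1 r2 r3 : Fin 3 → Fin 3 → Prop}
    (h1 : r1 ∈ D) (h2 : r2 ∈ D) (h3 : r3 ∈ D) {a b c : Fin 3}
    (hab : a ≠ b) (hbc : b ≠ c) (hca : c ≠ a)
    (r1ab : r1 a b) (r1bc : r1 b c) (r1ac : r1 a c)
    (r2bc : r2 b c) (r2ca : r2 c a) (r2ba : r2 b a)
    (r3ca : r3 c a) (r3ab : r3 a b) (r3cb : r3 c b) : False := by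
  have s1 := hD.1 r1 h1
  have s2 := hD.1 r2 h2
  have s3 := hD.1 r3 h3
  set P : Fin 3 → Fin 3 → Fin 3 → Prop := ![r1, r2, r3] with hP
  have hPD : ∀ i, P i ∈ D := by
    intro i
    fin_cases i <;> simp [hP] <;> assumption
  have htrans := hD.2 3 ⟨1, rfl⟩ P hPD
  have P0 : P 0 = r1 := rfl
  have P1 : P 1 = r2 := rfl
  have P2 : P 2 = r3 := rfl
  have maj_ab : Maj P a b := by
    have c1 : Nat.card {i // P i a b} = 2 := by
      refine card_eq_two _ 1 ?_ ?_
      · rw [P1]; exact stt_asymm s2 r2ba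
      · intro i hi; fin_cases i
        · exact r1ab
        · exact absurd rfl hi
        · exact r3ab
    have c2 : Nat.card {i // P i b a} = 1 := by
      refine card_eq_one _ 1 ?_ ?_
      · exact r2ba
      · intro i hi; fin_cases i
        · exact stt_asymm s1 r1ab
        · exact absurd rfl hi
        · exact stt_asymm s3 r3ab
    show _ > _
    rw [c1, c2]; exact one_lt_two
  have maj_bc : Maj P b c := by
    have c1 : Nat.card {i // P i b c} = 2 := by
      refine card_eq_two _ 2 ?_ ?_
      · rw [P2]; exact stt_asymm s3 r3cb
      · intro i hi; fin_cases i
        · exact r1bc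
        · exact r2bc
        · exact absurd rfl hi
    have c2 : Nat.card {i // P i c b} = 1 := by
      refine card_eq_one _ 2 ?_ ?_
      · exact r3cb
      · intro i hi; fin_cases i
        · exact stt_asymm s1 r1bc
        · exact stt_asymm s2 r2bc
        · exact absurd rfl hi
    show _ > _
    rw [c1, c2]; exact one_lt_two
  have maj_ca : Maj P c a := by
    have c1 : Nat.card {i // P i c a} = 2 := by
      refine card_eq_two _ 0 ?_ ?_
      · rw [P0]; exact stt_asymm s1 r1ac
      · intro i hi; fin_cases i
        · exact absurd rfl hi
        · exact r2ca
        · exact r3ca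
    have c2 : Nat.card {i // P i a c} = 1 := by
      refine card_eq_one _ 0 ?_ ?_
      · exact r1ac
      · intro i hi; fin_cases i
        · exact absurd rfl hi
        · exact stt_asymm s2 r2ca
        · exact stt_asymm s3 r3ca
    show _ > _
    rw [c1, c2]; exact one_lt_two
  have maj_ac : Maj P a c := htrans maj_ab maj_bc
  exact Nat.lt_asymm maj_ac maj_ca

lemma count_le (E : Set (Bool × Bool × Bool)) (m1 m2 m3 m4 : Bool × Bool × Bool)
    (hd : m1 ≠ m2 ∧ m1 ≠ m3 ∧ m1 ≠ m4 ∧ m2 ≠ m3 ∧ m2 ≠ m4 ∧ m3 ≠ m4)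
    (h1 : m1 ∉ E) (h2 : m2 ∉ E) (h3 : m3 ∉ E) (h4 : m4 ∉ E) : E.ncard ≤ 4 := by
  have hsub : E ⊆ ({m1, m2, m3, m4} : Set _)ᶜ := by
    intro x hx hmem
    rcases hmem with h | h | h | h <;> subst h <;> [exact h1 hx; exact h2 hx; exact h3 hx; exact h4 hx]
  calc E.ncard ≤ (({m1, m2, m3, m4} : Set (Bool × Bool × Bool))ᶜ).ncard :=
        Set.ncard_le_ncard hsub (Set.toFinite _)
    _ = 4 := by
        obtain ⟨d12, d13, d14, d23, d24, d34⟩ := hd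
        have hcard : ({m1, m2, m3, m4} : Set (Bool × Bool × Bool)).ncard = 4 := by
          rw [Set.ncard_insert_of_notMem (by simp [d12, d13, d14]) (Set.toFinite _),
              Set.ncard_insert_of_notMem (by simp [d23, d24]) (Set.toFinite _),
              Set.ncard_insert_of_notMem (by simp [d34]) (Set.toFinite _),
              Set.ncard_singleton]
        have := Set.ncard_add_ncard_compl ({m1, m2, m3, m4} : Set (Bool × Bool × Bool))
        have h8 : Nat.card (Bool × Bool × Bool) = 8 := by
          rw [Nat.card_eq_fintype_card]; decide
        rw [hcard, h8] at this
        omega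

end Aux

/-- Every Condorcet domain on a 3-element set of alternatives has size at most 4. -/
theorem condorcet_card_le_four (D : Set (Fin 3 → Fin 3 → Prop))
    (hD : IsCondorcetDomain D) : Nat.card D ≤ 4 := by
  set E : Set (Bool × Bool × Bool) := enc '' D with hE
  -- the two "intransitive" encodings never occur
  have hInv1 : (true, false, true) ∉ E := by
    rintro ⟨r, hrD, henc⟩
    have hr := hD.1 r hrD
    obtain ⟨e01, e02, e12⟩ := of_enc henc
    have h02 : r 0 2 := hr.trans 0 1 2 (e01.mpr rfl) (e12.mpr rfl)
    simpa [e02] using h02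
  have hInv2 : (false, true, false) ∉ E := by
    rintro ⟨r, hrD, henc⟩
    have hr := hD.1 r hrD
    obtain ⟨e01, e02, e12⟩ := of_enc henc
    have h10 : r 1 0 := stt_total hr (by decide) (by simp [e01])
    have h21 : r 2 1 := stt_total hr (by decide) (by simp [e12])
    have h20 : r 2 0 := hr.trans 2 1 0 h21 h10
    exact stt_asymm hr (e02.mpr rfl) h20
  -- no Condorcet cycle of the first kind
  have hA : (true, true, true) ∉ E ∨ (false, false, true) ∉ E ∨ (true, false, false) ∉ E := by
    by_contra h
    push_neg at h
    obtain ⟨⟨r1, h1, e1⟩, ⟨r2, h2, e2⟩, ⟨r3, h3, e3⟩⟩ := h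
    have s1 := hD.1 r1 h1; have s2 := hD.1 r2 h2; have s3 := hD.1 r3 h3
    obtain ⟨a01, a02, a12⟩ := of_enc e1
    obtain ⟨b01, b02, b12⟩ := of_enc e2
    obtain ⟨c01, c02, c12⟩ := of_enc e3
    exact no_cycle hD h1 h2 h3 (a := 0) (b := 1) (c := 2) (by decide) (by decide) (by decide)
      (a01.mpr rfl) (a12.mpr rfl) (a02.mpr rfl)
      (b12.mpr rfl) (stt_total s2 (by decide) (by simp [b02])) (stt_total s2 (by decide) (by simp [b01]))
      (stt_total s3 (by decide) (by simp [c02])) (c01.mpr rfl) (stt_total s3 (by decide) (by simp [c12]))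
  -- no Condorcet cycle of the second kind
  have hB : (true, true, false) ∉ E ∨ (false, false, false) ∉ E ∨ (false, true, true) ∉ E := by
    by_contra h
    push_neg at h
    obtain ⟨⟨r1, h1, e1⟩, ⟨r2, h2, e2⟩, ⟨r3, h3, e3⟩⟩ := h
    have s1 := hD.1 r1 h1; have s2 := hD.1 r2 h2; have s3 := hD.1 r3 h3
    obtain ⟨a01, a02, a12⟩ := of_enc e1
    obtain ⟨b01, b02, b12⟩ := of_enc e2
    obtain ⟨c01, c02, c12⟩ := of_enc e3
    -- r1 : 0<2<1 (ttf), r2 : 2<1<0 (fff), r3 : 1<0<2 (ftt); a=0, b=2, c=1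
    exact no_cycle hD h1 h2 h3 (a := 0) (b := 2) (c := 1) (by decide) (by decide) (by decide)
      (a02.mpr rfl) (stt_total s1 (by decide) (by simp [a12])) (a01.mpr rfl)
      (stt_total s2 (by decide) (by simp [b12])) (stt_total s2 (by decide) (by simp [b01])) (stt_total s2 (by decide) (by simp [b02]))
      (stt_total s3 (by decide) (by simp [c01])) (c02.mpr rfl) (c12.mpr rfl)
  -- conclude
  have hinj : Set.InjOn enc D := fun r hr s hs h =>
    enc_injOn (hD.1 r hr) (hD.1 s hs) h
  have hcards : Nat.card D = E.ncard := by
    rw [Nat.card_coe_set_eq, hE, Set.ncard_image_of_injOn hinj]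
  rw [hcards]
  rcases hA with hA | hA | hA <;> rcases hB with hB | hB | hB <;>
    exact count_le E _ _ _ _ (by decide) hA hB hInv1 hInv2
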